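/- arXiv:2309.03106 — 2 statements merged into one kernel-verified Lean document; each statement's English description precedes it below -/
import Mathlib

section
/- Suppose the 2×2 matrix function μ(x, k) solves μ_x + ik²[σ₃, μ] = (kQ + q₁)μ with Q = [[0, q], [-q̄, 0]] and q₁ = c·i|q|²σ₃ for real c. Then ν(x,k) := -σ · conj(μ(x, k̄)) · σ, where σ = [[0,1],[-1,0]], solves the same equation at parameter k. -/
open Matrix

def σ₃ : Matrix (Fin 2) (Fin 2) ℂ := !![1, 0; 0, -1]

def σmat : Matrix (Fin 2) (Fin 2) ℂ := !![0, 1; -1, 0]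

def Qmat (q : ℝ → ℂ) (x : ℝ) : Matrix (Fin 2) (Fin 2) ℂ :=
  !![0, q x; -(starRingEnd ℂ) (q x), 0]

/-- If the family μ(·,k) solves μ_x + ik²[σ₃,μ] = (kQ + c·i|q|²σ₃)μ for every spectral
parameter, then ν(x,k) := -σ · conj(μ(x,k̄)) · σ solves the same equation at parameter k. -/
theorem stmt5 (q : ℝ → ℂ) (c : ℝ) (k : ℂ)
    (μ μ' : ℂ → ℝ → Matrix (Fin 2) (Fin 2) ℂ)
    (hderiv : ∀ (K : ℂ) (x : ℝ) (i j : Fin 2),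
      HasDerivAt (fun y => μ K y i j) (μ' K x i j) x)
    (hode : ∀ (K : ℂ) (x : ℝ),
      μ' K x + (Complex.I * K ^ 2) • (σ₃ * μ K x - μ K x * σ₃)
        = ((K • Qmat q x + ((c : ℂ) * Complex.I * ((‖q x‖) ^ 2 : ℝ)) • σ₃)
            * μ K x)) :
    (∀ (x : ℝ) (i j : Fin 2),
      HasDerivAt
        (fun y => (-(σmat * (μ ((starRingEnd ℂ) k) y).map (starRingEnd ℂ) * σmat)) i j)
        ((-(σmat * (μ' ((starRingEnd ℂ) k) x).map (starRingEnd ℂ) * σmat)) i j) x) ∧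
    (∀ x : ℝ,
      (-(σmat * (μ' ((starRingEnd ℂ) k) x).map (starRingEnd ℂ) * σmat))
        + (Complex.I * k ^ 2) •
            (σ₃ * (-(σmat * (μ ((starRingEnd ℂ) k) x).map (starRingEnd ℂ) * σmat))
              - (-(σmat * (μ ((starRingEnd ℂ) k) x).map (starRingEnd ℂ) * σmat)) * σ₃)
        = ((k • Qmat q x + ((c : ℂ) * Complex.I * ((‖q x‖) ^ 2 : ℝ)) • σ₃)
            * (-(σmat * (μ ((starRingEnd ℂ) k) x).map (starRingEnd ℂ) * σmat)))) := by
  constructor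
  · intro x i j
    fin_cases i <;> fin_cases j
    · simpa [σmat, Matrix.mul_apply, Matrix.vecMul, dotProduct, Matrix.vecHead, Matrix.vecTail, Fin.sum_univ_two] using (hderiv ((starRingEnd ℂ) k) x 1 1).star
    · simpa [σmat, Matrix.mul_apply, Matrix.vecMul, dotProduct, Matrix.vecHead, Matrix.vecTail, Fin.sum_univ_two, Pi.neg_def] using ((hderiv ((starRingEnd ℂ) k) x 1 0).star).neg
    · simpa [σmat, Matrix.mul_apply, Matrix.vecMul, dotProduct, Matrix.vecHead, Matrix.vecTail, Fin.sum_univ_two, Pi.neg_def] using ((hderiv ((starRingEnd ℂ) k) x 0 1).star).neg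
    · simpa [σmat, Matrix.mul_apply, Matrix.vecMul, dotProduct, Matrix.vecHead, Matrix.vecTail, Fin.sum_univ_two] using (hderiv ((starRingEnd ℂ) k) x 0 0).star
  · intro x
    have h := hode ((starRingEnd ℂ) k) x
    have e : ∀ i j : Fin 2,
        (starRingEnd ℂ) ((μ' ((starRingEnd ℂ) k) x + (Complex.I * ((starRingEnd ℂ) k) ^ 2) •
          (σ₃ * μ ((starRingEnd ℂ) k) x - μ ((starRingEnd ℂ) k) x * σ₃)) i j)
        = (starRingEnd ℂ) ((((starRingEnd ℂ) k • Qmat q x +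
            ((c : ℂ) * Complex.I * ((‖q x‖) ^ 2 : ℝ)) • σ₃)
            * μ ((starRingEnd ℂ) k) x) i j) := by
      intro i j; rw [h]
    ext i j
    have e00 := e 0 0; have e01 := e 0 1; have e10 := e 1 0; have e11 := e 1 1
    simp [σ₃, σmat, Qmat, Matrix.mul_apply, Matrix.vecMul, dotProduct,
      Fin.sum_univ_two, Complex.conj_ofReal, map_pow] at e00 e01 e10 e11
    fin_cases i <;> fin_cases j
    · simp [σ₃, σmat, Qmat, Matrix.mul_apply, Matrix.vecMul, dotProduct, Matrix.vecHead, Matrix.vecTail, Fin.sum_univ_two]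
      linear_combination e11
    · simp [σ₃, σmat, Qmat, Matrix.mul_apply, Matrix.vecMul, dotProduct, Matrix.vecHead, Matrix.vecTail, Fin.sum_univ_two]
      linear_combination -e10
    · simp [σ₃, σmat, Qmat, Matrix.mul_apply, Matrix.vecMul, dotProduct, Matrix.vecHead, Matrix.vecTail, Fin.sum_univ_two]
      linear_combination -e01
    · simp [σ₃, σmat, Qmat, Matrix.mul_apply, Matrix.vecMul, dotProduct, Matrix.vecHead, Matrix.vecTail, Fin.sum_univ_two]
      linear_combination e00
end

section
/- Let t > 0, x real with -4√t ≤ x ≤ 4√t, and θ(k) = k²x + 2k⁴t. For k = 10b + bi with b ∈ ℝ, one has Re(iθ(k)) = -7920 t b⁴ - 20 x b². Moreover, for all b ∈ ℝ, Re(iθ(k)) ≤ 5x²/(396t) ≤ 20/99, hence |e^{2iθ(k)}| ≤ e^{40/99} on the ray {10b + bi : b ≥ 0}. -/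
/-- On the ray k = 10b + bi: Re(iθ(k)) = -7920tb⁴ - 20xb², this is bounded above by
5x²/(396t) ≤ 20/99 for |x| ≤ 4√t, hence |e^{2iθ(k)}| ≤ e^{40/99} on the ray b ≥ 0. -/
theorem stmt11 (x t : ℝ) (ht : 0 < t)
    (hx : -4 * Real.sqrt t ≤ x) (hx' : x ≤ 4 * Real.sqrt t) :
    (∀ b : ℝ,
      (Complex.I * (((10 * b : ℝ) + (b : ℝ) * Complex.I) ^ 2 * (x : ℂ)
          + 2 * ((10 * b : ℝ) + (b : ℝ) * Complex.I) ^ 4 * (t : ℂ))).re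
        = -7920 * t * b ^ 4 - 20 * x * b ^ 2) ∧
    (∀ b : ℝ, -7920 * t * b ^ 4 - 20 * x * b ^ 2 ≤ 5 * x ^ 2 / (396 * t)) ∧
    (5 * x ^ 2 / (396 * t) ≤ 20 / 99) ∧
    (∀ b : ℝ, 0 ≤ b →
      ‖Complex.exp (2 * Complex.I *
          (((10 * b : ℝ) + (b : ℝ) * Complex.I) ^ 2 * (x : ℂ)
            + 2 * ((10 * b : ℝ) + (b : ℝ) * Complex.I) ^ 4 * (t : ℂ)))‖
        ≤ Real.exp (40 / 99)) := by
  have hre : ∀ b : ℝ,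
      (Complex.I * (((10 * b : ℝ) + (b : ℝ) * Complex.I) ^ 2 * (x : ℂ)
          + 2 * ((10 * b : ℝ) + (b : ℝ) * Complex.I) ^ 4 * (t : ℂ))).re
        = -7920 * t * b ^ 4 - 20 * x * b ^ 2 := by
    intro b
    simp [Complex.ext_iff, pow_succ, Complex.mul_re, Complex.mul_im]
    ring
  have hx2 : x ^ 2 ≤ 16 * t := by
    have h := abs_le.mpr ⟨by linarith, hx'⟩
    have h2 : x ^ 2 ≤ (4 * Real.sqrt t) ^ 2 := by
      rw [← sq_abs]
      exact pow_le_pow_left₀ (abs_nonneg x) h 2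
    have : Real.sqrt t ^ 2 = t := Real.sq_sqrt ht.le
    nlinarith
  have hbd : ∀ b : ℝ, -7920 * t * b ^ 4 - 20 * x * b ^ 2 ≤ 5 * x ^ 2 / (396 * t) := by
    intro b
    rw [le_div_iff₀ (by positivity)]
    nlinarith [sq_nonneg (1584 * t * b ^ 2 + 2 * x), sq_nonneg b, ht.le]
  have hc : 5 * x ^ 2 / (396 * t) ≤ 20 / 99 := by
    rw [div_le_iff₀ (by positivity)]
    nlinarith
  refine ⟨hre, hbd, hc, ?_⟩
  intro b hb
  rw [Complex.norm_exp, Real.exp_le_exp]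
  have : (2 * Complex.I *
      (((10 * b : ℝ) + (b : ℝ) * Complex.I) ^ 2 * (x : ℂ)
        + 2 * ((10 * b : ℝ) + (b : ℝ) * Complex.I) ^ 4 * (t : ℂ))).re
      = 2 * (-7920 * t * b ^ 4 - 20 * x * b ^ 2) := by
    rw [← hre b]
    simp [mul_assoc, Complex.mul_re]
  rw [this]
  have := hbd b
  linarith
end
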